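/- Let T be a Markov operator on L¹([0,1], λ) with associated σ-algebras σ_T and σ*_T. If ψ ∈ L¹([0,1], λ) is λ-a.e. equal to a σ_T-measurable function, then Tψ is λ-a.e. equal to a σ*_T-measurable function. -/

import Mathlib

open MeasureTheory Set unitInterval Filter Topology

noncomputable section

open Classical in
/-- The indicator function `𝟙_S` of a set `S ⊆ [0,1]`, as an element of `L¹([0,1], λ)`
(where `λ` is Lebesgue measure on the unit interval `I = [0,1]`).
If `S` is not measurable we default to `0`. -/
def ind (S : Set I) : Lp ℝ 1 (volume : Measure I) :=
  if hS : MeasurableSet S then indicatorConstLp 1 hS (measure_ne_top _ _) (1:ℝ) else 0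

/-- A Markov operator on `L¹([0,1], λ)`: a bounded linear operator `T` with
(i) `T𝟙 = 𝟙`, (ii) `∫ Tψ = ∫ ψ` for all `ψ ∈ L¹`, (iii) `Tψ ≥ 0` a.e. whenever `ψ ≥ 0` a.e. -/
structure IsMarkovOperator
    (T : Lp ℝ 1 (volume : Measure I) →L[ℝ] Lp ℝ 1 (volume : Measure I)) : Prop where
  map_one : T (ind univ) = ind univ
  integral_map : ∀ ψ : Lp ℝ 1 (volume : Measure I), ∫ x, (T ψ) x = ∫ x, ψ x
  positive : ∀ ψ : Lp ℝ 1 (volume : Measure I), 0 ≤ᵐ[volume] ⇑ψ → 0 ≤ᵐ[volume] ⇑(T ψ)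

/-- `σ_T`: the collection of Borel sets `S ⊆ [0,1]` with `T𝟙_S = 𝟙_R` (λ-a.e.) for some Borel
`R ⊆ [0,1]`.  (Equality in `L¹` is exactly λ-a.e. equality.) -/
def sigmaT (T : Lp ℝ 1 (volume : Measure I) →L[ℝ] Lp ℝ 1 (volume : Measure I)) :
    Set (Set I) :=
  {S | MeasurableSet S ∧ ∃ R : Set I, MeasurableSet R ∧ T (ind S) = ind R}

/-- `σ*_T`: the collection of Borel sets `R ⊆ [0,1]` with `T𝟙_S = 𝟙_R` (λ-a.e.) for some Borel
`S ⊆ [0,1]`. -/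
def sigmaTstar (T : Lp ℝ 1 (volume : Measure I) →L[ℝ] Lp ℝ 1 (volume : Measure I)) :
    Set (Set I) :=
  {R | MeasurableSet R ∧ ∃ S : Set I, MeasurableSet S ∧ T (ind S) = ind R}

namespace Stmt3Aux
variable {T : Lp ℝ 1 (volume : Measure I) →L[ℝ] Lp ℝ 1 (volume : Measure I)}

lemma ind_coeFn {S : Set I} (hS : MeasurableSet S) :
    ⇑(ind S) =ᵐ[volume] S.indicator fun _ => (1:ℝ) := by
  rw [ind, dif_pos hS]; exact indicatorConstLp_coeFn

lemma integral_ind {S : Set I} (hS : MeasurableSet S) :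
    ∫ x, (ind S) x = (volume S).toReal := by
  rw [ind, dif_pos hS, integral_indicatorConstLp hS (measure_ne_top _ _), smul_eq_mul, mul_one, measureReal_def]

lemma markov_mono (hT : IsMarkovOperator T) {f g : Lp ℝ 1 (volume : Measure I)}
    (hfg : ⇑f ≤ᵐ[volume] ⇑g) : ⇑(T f) ≤ᵐ[volume] ⇑(T g) := by
  have h1 : 0 ≤ᵐ[volume] ⇑(g - f) := by
    filter_upwards [Lp.coeFn_sub g f, hfg] with x hx1 hx2
    rw [hx1]; simpa using hx2
  have h2 := hT.positive _ h1
  rw [map_sub] at h2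
  filter_upwards [h2, Lp.coeFn_sub (T g) (T f)] with x hx1 hx2
  rw [hx2] at hx1
  simpa using hx1

lemma T_ind_nonneg (hT : IsMarkovOperator T) {S : Set I} (hS : MeasurableSet S) :
    0 ≤ᵐ[volume] ⇑(T (ind S)) := by
  refine hT.positive _ ?_
  filter_upwards [ind_coeFn hS] with x hx
  rw [hx]; exact indicator_nonneg (fun _ _ => zero_le_one) x

lemma T_ind_le_one (hT : IsMarkovOperator T) {S : Set I} (hS : MeasurableSet S) :
    ⇑(T (ind S)) ≤ᵐ[volume] fun _ => (1:ℝ) := by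
  have h := markov_mono hT (f := ind S) (g := ind univ) ?_
  · rw [hT.map_one] at h
    filter_upwards [h, ind_coeFn MeasurableSet.univ] with x hx1 hx2
    rw [hx2] at hx1; simpa using hx1
  · filter_upwards [ind_coeFn hS, ind_coeFn MeasurableSet.univ] with x hx1 hx2
    rw [hx1, hx2]
    by_cases hxS : x ∈ S <;> simp [hxS]

lemma T_ind_eq (hT : IsMarkovOperator T) {S R : Set I} (hS : MeasurableSet S)
    (hR : MeasurableSet R)
    (h_le : (R.indicator fun _ => (1:ℝ)) ≤ᵐ[volume] ⇑(T (ind S)))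
    (h_meas : volume R = volume S) : T (ind S) = ind R := by
  have hint : Integrable (⇑(T (ind S))) volume := L1.integrable_coeFn _
  have hRint : Integrable (R.indicator fun _ => (1:ℝ)) volume :=
    (integrable_const (1:ℝ)).indicator hR
  have h0 : ∫ x, ((T (ind S)) x - R.indicator (fun _ => (1:ℝ)) x) = 0 := by
    rw [integral_sub hint hRint, hT.integral_map, integral_ind hS,
      integral_indicator_const (1:ℝ) hR, measureReal_def, h_meas]
    simp
  have hae := (integral_eq_zero_iff_of_nonneg_ae ?_ (hint.sub hRint)).1 h0
  · apply Lp.ext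
    filter_upwards [hae, ind_coeFn hR] with x hx1 hx2
    have : (T (ind S)) x - R.indicator (fun _ => (1:ℝ)) x = 0 := hx1
    rw [hx2]; linarith
  · filter_upwards [h_le] with x hx
    simpa [sub_nonneg] using hx

lemma univ_mem (hT : IsMarkovOperator T) : univ ∈ sigmaT T :=
  ⟨MeasurableSet.univ, univ, MeasurableSet.univ, hT.map_one⟩

lemma ind_compl_eq {S : Set I} (hS : MeasurableSet S) : ind Sᶜ = ind univ - ind S := by
  apply Lp.ext
  filter_upwards [ind_coeFn hS.compl, ind_coeFn hS, ind_coeFn MeasurableSet.univ,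
    Lp.coeFn_sub (ind univ) (ind S)] with x hx1 hx2 hx3 hx4
  rw [hx1, hx4, Pi.sub_apply, hx2, hx3]
  by_cases hxS : x ∈ S <;> simp [hxS]

lemma compl_mem (hT : IsMarkovOperator T) {S : Set I} (hS : S ∈ sigmaT T) :
    Sᶜ ∈ sigmaT T := by
  obtain ⟨hSm, R, hRm, hTR⟩ := hS
  refine ⟨hSm.compl, Rᶜ, hRm.compl, ?_⟩
  rw [ind_compl_eq hSm, map_sub, hT.map_one, hTR, ind_compl_eq hRm]

lemma indicator_mono_ae (hT : IsMarkovOperator T) {S₁ S₂ : Set I} (h₁ : MeasurableSet S₁)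
    (h₂ : MeasurableSet S₂) (hsub : S₁ ⊆ S₂) :
    ⇑(T (ind S₁)) ≤ᵐ[volume] ⇑(T (ind S₂)) := by
  refine markov_mono hT ?_
  filter_upwards [ind_coeFn h₁, ind_coeFn h₂] with x hx1 hx2
  rw [hx1, hx2]
  by_cases hxS : x ∈ S₁
  · simp [hxS, hsub hxS]
  · simp only [indicator]
    split_ifs <;> norm_num

lemma union_mem (hT : IsMarkovOperator T) {S₁ S₂ : Set I} (h₁ : S₁ ∈ sigmaT T)
    (h₂ : S₂ ∈ sigmaT T) : S₁ ∪ S₂ ∈ sigmaT T := by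
  obtain ⟨hS₁, R₁, hR₁, hT₁⟩ := h₁
  obtain ⟨hS₂, R₂, hR₂, hT₂⟩ := h₂
  refine ⟨hS₁.union hS₂, R₁ ∪ R₂, hR₁.union hR₂, ?_⟩
  have hlow₁ := indicator_mono_ae hT hS₁ (hS₁.union hS₂) subset_union_left
  have hlow₂ := indicator_mono_ae hT hS₂ (hS₁.union hS₂) subset_union_right
  rw [hT₁] at hlow₁; rw [hT₂] at hlow₂
  have hup : ⇑(T (ind (S₁ ∪ S₂))) ≤ᵐ[volume] ⇑(T (ind S₁ + ind S₂)) := by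
    refine markov_mono hT ?_
    filter_upwards [ind_coeFn (hS₁.union hS₂), ind_coeFn hS₁, ind_coeFn hS₂,
      Lp.coeFn_add (ind S₁) (ind S₂)] with x hx1 hx2 hx3 hx4
    rw [hx1, hx4, Pi.add_apply, hx2, hx3]
    by_cases ha : x ∈ S₁ <;> by_cases hb : x ∈ S₂ <;> simp [ha, hb]
  rw [map_add, hT₁, hT₂] at hup
  apply Lp.ext
  filter_upwards [hlow₁, hlow₂, hup, ind_coeFn hR₁, ind_coeFn hR₂,
    ind_coeFn (hR₁.union hR₂), Lp.coeFn_add (ind R₁) (ind R₂),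
    T_ind_nonneg hT (hS₁.union hS₂), T_ind_le_one hT (hS₁.union hS₂)]
      with x hl₁ hl₂ hu hi₁ hi₂ hi hadd h0 h1
  rw [hi₁] at hl₁; rw [hi₂] at hl₂
  rw [hadd, Pi.add_apply, hi₁, hi₂] at hu
  rw [hi]
  by_cases ha : x ∈ R₁
  · simp only [indicator, mem_union, ha, true_or, if_pos, if_true]
    have : (1:ℝ) ≤ T (ind (S₁ ∪ S₂)) x := by simpa [ha] using hl₁
    exact le_antisymm h1 this
  · by_cases hb : x ∈ R₂
    · simp only [indicator, mem_union, hb, or_true, if_true]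
      have : (1:ℝ) ≤ T (ind (S₁ ∪ S₂)) x := by simpa [hb] using hl₂
      exact le_antisymm h1 this
    · simp only [indicator, mem_union, ha, hb, or_self, if_false]
      have : T (ind (S₁ ∪ S₂)) x ≤ 0 := by simpa [ha, hb] using hu
      exact le_antisymm this h0

end Stmt3Aux

namespace Stmt3Aux

lemma iUnion_mem (hT : IsMarkovOperator T) {S : ℕ → Set I} (hS : ∀ n, S n ∈ sigmaT T) :
    (⋃ n, S n) ∈ sigmaT T := by
  -- increasing exhaustion
  let F : ℕ → Set I := fun n => Nat.rec (S 0) (fun k Fk => Fk ∪ S (k + 1)) n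
  have hFsucc : ∀ n, F (n + 1) = F n ∪ S (n + 1) := fun n => rfl
  have hFmem : ∀ n, F n ∈ sigmaT T := by
    intro n; induction n with
    | zero => exact hS 0
    | succ k ih => rw [hFsucc]; exact union_mem hT ih (hS (k + 1))
  have hFmono : Monotone F := monotone_nat_of_le_succ fun n => by
    rw [hFsucc]; exact subset_union_left
  have hFU : (⋃ n, F n) = ⋃ n, S n := by
    apply subset_antisymm
    · refine iUnion_subset fun n => ?_
      induction n with
      | zero => exact subset_iUnion S 0
      | succ k ih => rw [hFsucc]; exact union_subset ih (subset_iUnion S (k + 1))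
    · refine iUnion_subset fun n => ?_
      refine subset_trans ?_ (subset_iUnion F n)
      cases n with
      | zero => exact subset_rfl
      | succ k => rw [hFsucc]; exact subset_union_right
  have hFmeas : ∀ n, MeasurableSet (F n) := fun n => (hFmem n).1
  choose R hRmeas hTR using fun n => (hFmem n).2
  have hSU : MeasurableSet (⋃ n, S n) := MeasurableSet.iUnion fun n => (hS n).1
  have hRU : MeasurableSet (⋃ n, R n) := MeasurableSet.iUnion hRmeas
  -- a.e. monotonicity of R
  have hnull : ∀ k n, k ≤ n → volume (R k \ R n) = 0 := by
    intro k n hkn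
    have h1 := indicator_mono_ae hT (hFmeas k) (hFmeas n) (hFmono hkn)
    rw [hTR k, hTR n] at h1
    have h2 : ∀ᵐ x ∂(volume : Measure I), x ∈ R k → x ∈ R n := by
      filter_upwards [h1, ind_coeFn (hRmeas k), ind_coeFn (hRmeas n)] with x hx1 hx2 hx3
      intro hxk
      rw [hx2, hx3] at hx1
      by_contra hxn
      simp only [indicator_of_mem hxk, indicator_of_notMem hxn] at hx1
      norm_num at hx1
    rw [ae_iff] at h2
    refine measure_mono_null ?_ h2
    intro x hx
    simp only [mem_setOf_eq, Classical.not_imp]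
    exact ⟨hx.1, hx.2⟩
  -- measure equalities
  have hmeq : ∀ n, volume (R n) = volume (F n) := by
    intro n
    have h1 := hT.integral_map (ind (F n))
    rw [hTR n, integral_ind (hRmeas n), integral_ind (hFmeas n)] at h1
    exact (ENNReal.toReal_eq_toReal_iff' (measure_ne_top _ _) (measure_ne_top _ _)).1 h1
  have hacc : ∀ n, volume (accumulate R n) = volume (R n) := by
    intro n
    refine le_antisymm ?_ (measure_mono subset_accumulate)
    have hd : volume (accumulate R n \ R n) = 0 := by
      have hsub : accumulate R n \ R n ⊆ ⋃ k ∈ {k : ℕ | k ≤ n}, (R k \ R n) := by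
        intro x hx
        obtain ⟨k, hk, hxk⟩ := mem_accumulate.1 hx.1
        exact mem_iUnion₂.2 ⟨k, hk, hxk, hx.2⟩
      refine measure_mono_null hsub ?_
      exact (measure_biUnion_null_iff (to_countable _)).2 fun k hk => hnull k n hk
    calc volume (accumulate R n) = volume (R n ∪ (accumulate R n \ R n)) := by
          rw [union_diff_cancel subset_accumulate]
      _ ≤ volume (R n) + volume (accumulate R n \ R n) := measure_union_le _ _
      _ = volume (R n) := by rw [hd, add_zero]
  -- limit: volume (⋃ R) = volume (⋃ S)
  have hRmeas_eq : volume (⋃ n, R n) = volume (⋃ n, S n) := by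
    have hl1 : Tendsto (⇑(volume : Measure I) ∘ F) atTop (𝓝 (volume (⋃ n, S n))) := by
      have := tendsto_measure_iUnion_atTop (μ := (volume : Measure I)) hFmono
      rwa [hFU] at this
    have hl2 : Tendsto (⇑(volume : Measure I) ∘ F) atTop (𝓝 (volume (⋃ n, R n))) := by
      have := tendsto_measure_iUnion_atTop (μ := (volume : Measure I))
        (monotone_accumulate (s := R))
      rw [iUnion_accumulate] at this
      have heq : (⇑(volume : Measure I) ∘ accumulate R) = ⇑(volume : Measure I) ∘ F := by
        funext n; simp only [Function.comp_apply]; rw [hacc n, hmeq n]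
      rwa [heq] at this
    exact (tendsto_nhds_unique hl2 hl1)
  -- lower bound
  have hlow : ((⋃ n, R n).indicator fun _ => (1:ℝ)) ≤ᵐ[volume] ⇑(T (ind (⋃ n, S n))) := by
    have h1 : ∀ n, ((R n).indicator fun _ => (1:ℝ)) ≤ᵐ[volume] ⇑(T (ind (⋃ n, S n))) := by
      intro n
      have := indicator_mono_ae hT (hFmeas n) hSU
        ((hFU ▸ subset_iUnion F n : F n ⊆ ⋃ n, S n))
      rw [hTR n] at this
      filter_upwards [this, ind_coeFn (hRmeas n)] with x hx1 hx2
      rw [← hx2]; exact hx1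
    filter_upwards [ae_all_iff.2 h1, T_ind_nonneg hT hSU] with x hx1 hx2
    by_cases hxU : x ∈ ⋃ n, R n
    · obtain ⟨n, hn⟩ := mem_iUnion.1 hxU
      have := hx1 n
      rw [indicator_of_mem hn] at this
      rwa [indicator_of_mem hxU]
    · rw [indicator_of_notMem hxU]; exact hx2
  exact ⟨hSU, ⋃ n, R n, hRU, T_ind_eq hT hSU hRU hlow hRmeas_eq⟩

/-- `sigmaT T` as a measurable space structure. -/
def MT (T : Lp ℝ 1 (volume : Measure I) →L[ℝ] Lp ℝ 1 (volume : Measure I))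
    (hT : IsMarkovOperator T) : MeasurableSpace I where
  MeasurableSet' A := A ∈ sigmaT T
  measurableSet_empty := by simpa using compl_mem hT (univ_mem hT)
  measurableSet_compl _ h := compl_mem hT h
  measurableSet_iUnion _ h := iUnion_mem hT h

lemma mem_sigmaT_of_generate (hT : IsMarkovOperator T) {A : Set I}
    (hA : MeasurableSet[MeasurableSpace.generateFrom (sigmaT T)] A) : A ∈ sigmaT T :=
  (MeasurableSpace.generateFrom_le (m := MT T hT) (fun _ hs => hs)) A hA

end Stmt3Aux

namespace Stmt3Aux

lemma coeFn_sum_smul_ind {ι : Type} (t : Finset ι) (c : ι → ℝ) (A : ι → Set I)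
    (hA : ∀ i, MeasurableSet (A i)) :
    ⇑(∑ i ∈ t, c i • ind (A i)) =ᵐ[volume]
      fun x => ∑ i ∈ t, c i * (A i).indicator (fun _ => (1:ℝ)) x := by
  classical
  induction t using Finset.induction_on with
  | empty => simp only [Finset.sum_empty]; exact Lp.coeFn_zero ℝ 1 (volume : Measure I)
  | @insert a t ha ih =>
    rw [Finset.sum_insert ha]
    filter_upwards [Lp.coeFn_add (c a • ind (A a)) (∑ i ∈ t, c i • ind (A i)),
      Lp.coeFn_smul (c a) (ind (A a)), ind_coeFn (hA a), ih] with x h1 h2 h3 h4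
    rw [h1, Pi.add_apply, h2, Pi.smul_apply, h3, h4, Finset.sum_insert ha]
    simp [smul_eq_mul]

/-- L¹ approximation of a measurable integrable function by explicit simple combinations of
indicators, over an abstract measurable space. -/
lemma exists_simple_approx {α : Type} [m : MeasurableSpace α] (ν : Measure α) (g : α → ℝ)
    (hg : Measurable g) (hint : Integrable g ν) :
    ∃ (N : ℕ → Finset ℝ) (A : ℕ → ℝ → Set α), (∀ n c, MeasurableSet (A n c)) ∧
      Tendsto (fun n => eLpNorm
        ((fun x => ∑ c ∈ N n, c * (A n c).indicator (fun _ => (1:ℝ)) x) - g) 1 ν)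
        atTop (𝓝 0) := by
  classical
  let s : ℕ → SimpleFunc α ℝ := fun n => SimpleFunc.approxOn g hg univ 0 (mem_univ 0) n
  refine ⟨fun n => (s n).range, fun n c => ⇑(s n) ⁻¹' {c},
    fun n c => (s n).measurableSet_fiber c, ?_⟩
  have hrepr : ∀ n, (fun x => ∑ c ∈ (s n).range,
      c * ((⇑(s n) ⁻¹' {c}).indicator (fun _ => (1:ℝ)) x)) = ⇑(s n) := by
    intro n; funext x
    rw [Finset.sum_eq_single_of_mem (s n x) (SimpleFunc.mem_range_self (s n) x)]
    · simp
    · intro b hb hbne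
      have hxb : x ∉ ⇑(s n) ⁻¹' {b} := by
        intro hxmem
        have hsb : (s n) x = b := hxmem
        exact hbne hsb.symm
      simp [hxb]
  have htendsto : Tendsto (fun n => ∫⁻ x, ‖s n x - g x‖₊ ∂ν) atTop (𝓝 0) := by
    refine SimpleFunc.tendsto_approxOn_L1_enorm hg (mem_univ (0:ℝ))
      (Eventually.of_forall fun x => by simp) ?_
    simpa using hint.hasFiniteIntegral
  have : ∀ n, eLpNorm ((fun x => ∑ c ∈ (s n).range,
      c * ((⇑(s n) ⁻¹' {c}).indicator (fun _ => (1:ℝ)) x)) - g) 1 ν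
      = ∫⁻ x, ‖s n x - g x‖₊ ∂ν := by
    intro n
    rw [hrepr n, eLpNorm_one_eq_lintegral_enorm]
    rfl
  simp only [this]
  exact htendsto

end Stmt3Aux

open Stmt3Aux

/-- Let `T` be a Markov operator on `L¹([0,1], λ)` with associated σ-algebras
`σ_T` and `σ*_T`. If `ψ ∈ L¹([0,1], λ)` is λ-a.e. equal to a `σ_T`-measurable function, then
`Tψ` is λ-a.e. equal to a `σ*_T`-measurable function. -/
theorem stmt3
    (T : Lp ℝ 1 (volume : Measure I) →L[ℝ] Lp ℝ 1 (volume : Measure I))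
    (hT : IsMarkovOperator T) (ψ : Lp ℝ 1 (volume : Measure I))
    (h : ∃ g : I → ℝ, Measurable[MeasurableSpace.generateFrom (sigmaT T)] g ∧
      ⇑ψ =ᵐ[volume] g) :
    ∃ g' : I → ℝ, Measurable[MeasurableSpace.generateFrom (sigmaTstar T)] g' ∧
      ⇑(T ψ) =ᵐ[volume] g' := by
  classical
  obtain ⟨g, hg, hψg⟩ := h
  have hm : MeasurableSpace.generateFrom (sigmaT T) ≤ (inferInstance : MeasurableSpace I) :=
    MeasurableSpace.generateFrom_le fun s hs => hs.1
  have hψ_int : Integrable (⇑ψ) volume := L1.integrable_coeFn ψ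
  have hg_int : Integrable g volume := hψ_int.congr hψg
  have hg_sm : StronglyMeasurable[MeasurableSpace.generateFrom (sigmaT T)] g :=
    hg.stronglyMeasurable
  have hg_int_trim : Integrable g ((volume : Measure I).trim hm) := hg_int.trim hm hg_sm
  obtain ⟨N, A, hA_meas_m, htend⟩ :=
    @exists_simple_approx I (MeasurableSpace.generateFrom (sigmaT T))
      ((volume : Measure I).trim hm) g hg hg_int_trim
  have hA_mem : ∀ n c, A n c ∈ sigmaT T := fun n c =>
    mem_sigmaT_of_generate hT (hA_meas_m n c)
  have hA_meas : ∀ n c, MeasurableSet (A n c) := fun n c => (hA_mem n c).1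
  choose Rc hRc_meas hRc_T using fun n (c : ℝ) => (hA_mem n c).2
  set f : ℕ → I → ℝ := fun n x => ∑ c ∈ N n, c * (A n c).indicator (fun _ => (1:ℝ)) x with hf
  have hf_sm : ∀ n, StronglyMeasurable[MeasurableSpace.generateFrom (sigmaT T)] (f n) := by
    intro n
    refine Measurable.stronglyMeasurable ?_
    exact Finset.measurable_sum _ fun c _ =>
      (measurable_const.indicator (hA_meas_m n c)).const_mul c
  have htend' : Tendsto (fun n => eLpNorm (f n - g) 1 (volume : Measure I)) atTop (𝓝 0) := by
    have : ∀ n, eLpNorm (f n - g) 1 (volume : Measure I)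
        = eLpNorm (f n - g) 1 ((volume : Measure I).trim hm) :=
      fun n => (eLpNorm_trim hm ((hf_sm n).sub hg_sm)).symm
    simp only [this]
    exact htend
  -- Lp elements
  set Fn : ℕ → Lp ℝ 1 (volume : Measure I) :=
    fun n => ∑ c ∈ N n, c • ind (A n c) with hFn
  have hFn_coe : ∀ n, ⇑(Fn n) =ᵐ[volume] f n := by
    intro n
    filter_upwards [coeFn_sum_smul_ind (N n) id (A n) (hA_meas n)] with x hx
    exact hx
  -- convergence of Fn to ψ in L¹
  have hnorm_eq : ∀ n, ‖Fn n - ψ‖ = (eLpNorm (f n - g) 1 (volume : Measure I)).toReal := by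
    intro n
    rw [Lp.norm_def]
    congr 1
    refine eLpNorm_congr_ae ?_
    filter_upwards [Lp.coeFn_sub (Fn n) ψ, hFn_coe n, hψg] with x h1 h2 h3
    rw [h1, Pi.sub_apply, h2, h3, Pi.sub_apply]
  have hnorm_tendsto : Tendsto (fun n => ‖Fn n - ψ‖) atTop (𝓝 0) := by
    simp only [hnorm_eq]
    have := (ENNReal.tendsto_toReal (a := 0) (by simp)).comp htend'
    simpa [Function.comp_def] using this
  have hFn_tendsto : Tendsto Fn atTop (𝓝 ψ) :=
    tendsto_iff_norm_sub_tendsto_zero.2 hnorm_tendsto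
  have hTFn_tendsto : Tendsto (fun n => T (Fn n)) atTop (𝓝 (T ψ)) :=
    (T.continuous.tendsto ψ).comp hFn_tendsto
  -- to eLpNorm convergence
  have hTnorm : Tendsto (fun n => eLpNorm (⇑(T (Fn n)) - ⇑(T ψ)) 1 (volume : Measure I))
      atTop (𝓝 0) := by
    have heq : ∀ n, eLpNorm (⇑(T (Fn n)) - ⇑(T ψ)) 1 (volume : Measure I)
        = ENNReal.ofReal ‖T (Fn n) - T ψ‖ := by
      intro n
      rw [Lp.norm_def, ENNReal.ofReal_toReal (Lp.eLpNorm_ne_top _)]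
      refine eLpNorm_congr_ae ?_
      filter_upwards [Lp.coeFn_sub (T (Fn n)) (T ψ)] with x h1
      rw [h1]
    simp only [heq]
    have h0 : Tendsto (fun n => ‖T (Fn n) - T ψ‖) atTop (𝓝 0) :=
      tendsto_iff_norm_sub_tendsto_zero.1 hTFn_tendsto
    have := (ENNReal.continuous_ofReal.tendsto 0).comp h0
    simpa [Function.comp_def] using this
  have hmeasconv : TendstoInMeasure (volume : Measure I) (fun n => ⇑(T (Fn n))) atTop
      (⇑(T ψ)) :=
    tendstoInMeasure_of_tendsto_eLpNorm one_ne_zero (fun n => Lp.aestronglyMeasurable _)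
      (Lp.aestronglyMeasurable _) hTnorm
  obtain ⟨ns, _, hns_ae⟩ := hmeasconv.exists_seq_tendsto_ae
  -- the image functions
  set γ : ℕ → I → ℝ := fun n x => ∑ c ∈ N n, c * (Rc n c).indicator (fun _ => (1:ℝ)) x with hγ
  have hγ_meas : ∀ n, Measurable[MeasurableSpace.generateFrom (sigmaTstar T)] (γ n) := by
    intro n
    refine Finset.measurable_sum _ fun c _ => ?_
    have hRstar : Rc n c ∈ sigmaTstar T := ⟨hRc_meas n c, A n c, hA_meas n c, hRc_T n c⟩
    exact (measurable_const.indicator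
      (MeasurableSpace.measurableSet_generateFrom hRstar)).const_mul c
  have hTFn_coe : ∀ n, ⇑(T (Fn n)) =ᵐ[volume] γ n := by
    intro n
    have hmap : T (Fn n) = ∑ c ∈ N n, c • ind (Rc n c) := by
      rw [hFn, map_sum]
      exact Finset.sum_congr rfl fun c _ => by rw [ContinuousLinearMap.map_smul, hRc_T n c]
    rw [hmap]
    filter_upwards [coeFn_sum_smul_ind (N n) id (Rc n) (hRc_meas n)] with x hx
    exact hx
  refine ⟨fun x => limsup (fun k => γ (ns k) x) atTop, ?_, ?_⟩
  · exact Measurable.limsup fun k => hγ_meas (ns k)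
  · filter_upwards [hns_ae, ae_all_iff.2 fun k => hTFn_coe (ns k)] with x hx1 hx2
    have hx3 : Tendsto (fun k => γ (ns k) x) atTop (𝓝 ((T ψ) x)) :=
      hx1.congr fun k => hx2 k
    exact hx3.limsup_eq.symm
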